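/- Let d > 0 and let V be a real number with 0 ≤ V < d/2. For the function f(τ) = 1/(d - 2Vτ) on [0,1] and any 0 ≤ s < t ≤ 1, the strict inequality (t - s)/(d - V(t+s)) < ∫_s^t dτ/(d - 2Vτ) holds, provided V > 0. -/

import Mathlib

lemma two_div_lt_log {x : ℝ} (hx : 1 < x) : 2 * (x - 1) / (x + 1) < Real.log x := by
  have key : StrictMonoOn (fun y : ℝ => Real.log y - 2 * (y - 1) / (y + 1)) (Set.Ici 1) := by
    apply strictMonoOn_of_deriv_pos (convex_Ici 1)
    · apply ContinuousOn.sub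
      · exact Real.continuousOn_log.mono (fun y hy => by
          simp only [Set.mem_Ici, Set.mem_compl_iff, Set.mem_singleton_iff] at *; linarith)
      · apply ContinuousOn.div (by fun_prop) (by fun_prop)
        intro y hy; simp only [Set.mem_Ici] at hy; intro h; linarith
    · intro y hy
      rw [interior_Ici, Set.mem_Ioi] at hy
      have hy0 : 0 < y := by linarith
      have hy1 : y + 1 ≠ 0 := by linarith
      have hd1 : HasDerivAt (fun y : ℝ => 2 * (y - 1) / (y + 1))
          ((2 * (y + 1) - 2 * (y - 1)) / (y + 1) ^ 2) y := by
        have h := (((hasDerivAt_id y).sub_const 1).const_mul 2).div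
          ((hasDerivAt_id y).add_const 1) hy1
        refine h.congr_deriv ?_
        simp [id]
      have hd := (Real.hasDerivAt_log hy0.ne').sub hd1
      rw [(show HasDerivAt (fun y : ℝ => Real.log y - 2 * (y - 1) / (y + 1)) _ y from hd).deriv]
      have h4 : y⁻¹ - (2 * (y + 1) - 2 * (y - 1)) / (y + 1) ^ 2
          = (y - 1) ^ 2 / (y * (y + 1) ^ 2) := by
        field_simp
        ring
      rw [h4]
      exact div_pos (pow_pos (by linarith) 2) (by positivity)
  have h := key (Set.self_mem_Ici) (Set.mem_Ici.mpr hx.le) hx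
  simpa using h

/-- For `d > 0`, `0 < V < d/2`, and `0 ≤ s < t ≤ 1`, the strict inequality
`(t - s)/(d - V(t+s)) < ∫_s^t dτ/(d - 2Vτ)` holds. -/
theorem chord_lt_integral (d V s t : ℝ) (hd : 0 < d) (hV0 : 0 < V) (hV : V < d / 2)
    (hs : 0 ≤ s) (hst : s < t) (ht : t ≤ 1) :
    (t - s) / (d - V * (t + s)) < ∫ τ in s..t, 1 / (d - 2 * V * τ) := by
  have hpos : ∀ τ ∈ Set.Icc s t, 0 < d - 2 * V * τ := by
    intro τ hτ
    have : τ ≤ 1 := le_trans hτ.2 ht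
    nlinarith
  have ha : 0 < d - 2 * V * s := hpos s ⟨le_refl s, hst.le⟩
  have hb : 0 < d - 2 * V * t := hpos t ⟨hst.le, le_refl t⟩
  set a := d - 2 * V * s with ha_def
  set b := d - 2 * V * t with hb_def
  have hba : b < a := by simp [ha_def, hb_def]; nlinarith
  -- compute the integral
  have hint : (∫ τ in s..t, 1 / (d - 2 * V * τ)) =
      (1 / (2 * V)) * (Real.log a - Real.log b) := by
    have hderiv : ∀ τ ∈ Set.uIcc s t,
        HasDerivAt (fun τ : ℝ => -(1 / (2 * V)) * Real.log (d - 2 * V * τ))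
          (1 / (d - 2 * V * τ)) τ := by
      intro τ hτ
      rw [Set.uIcc_of_le hst.le] at hτ
      have hpτ : 0 < d - 2 * V * τ := hpos τ hτ
      have h1 : HasDerivAt (fun τ : ℝ => d - 2 * V * τ) (-(2 * V)) τ := by
        simpa using ((hasDerivAt_id τ).const_mul (2 * V)).const_sub d
      have h2 := (h1.log hpτ.ne').const_mul (-(1 / (2 * V)))
      refine h2.congr_deriv ?_
      field_simp
    have hcont : ContinuousOn (fun τ : ℝ => 1 / (d - 2 * V * τ)) (Set.uIcc s t) := by
      apply ContinuousOn.div continuousOn_const (by fun_prop)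
      intro τ hτ
      rw [Set.uIcc_of_le hst.le] at hτ
      exact (hpos τ hτ).ne'
    rw [intervalIntegral.integral_eq_sub_of_hasDerivAt hderiv
      (hcont.intervalIntegrable)]
    ring
  rw [hint]
  have hx : 1 < a / b := (one_lt_div hb).mpr hba
  have hlog := two_div_lt_log hx
  rw [← Real.log_div ha.ne' hb.ne']
  have h1 : 2 * (a / b - 1) / (a / b + 1) = 2 * (a - b) / (a + b) := by
    rw [div_eq_div_iff (by positivity) (by positivity)]
    field_simp
  rw [h1] at hlog
  have hLHS : (t - s) / (d - V * (t + s)) = (1 / (2 * V)) * (2 * (a - b) / (a + b)) := by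
    have h2 : a - b = 2 * V * (t - s) := by simp [ha_def, hb_def]; ring
    have h3 : a + b = 2 * (d - V * (t + s)) := by simp [ha_def, hb_def]; ring
    have hden : 0 < d - V * (t + s) := by nlinarith
    rw [h2, h3]
    field_simp
  rw [hLHS]
  exact mul_lt_mul_of_pos_left hlog (by positivity)
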